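/- Let (R,m) be a one-dimensional Cohen–Macaulay Noetherian local ring with infinite residue field, I an m-primary ideal, and (x) a minimal reduction of m. If μ(I) = e(R), then mI^n = xI^n for all n ≥ 1, and hence μ(I^n) = e(R) for all n ≥ 1; i.e., the Hilbert series of the fiber cone is (1 + (e(R) − 1)λ)/(1 − λ). -/

import Mathlib

open IsLocalRing

/-- The length of a module, as the Krull dimension of its lattice of submodules. -/
noncomputable def modLength (R M : Type*) [Ring R] [AddCommGroup M] [Module R M] :
    WithBot ℕ∞ :=
  Order.krullDim (Submodule R M)

/-- The length `ℓ(P/N)` of the subquotient `P/N` of `R` determined by ideals `N ≤ P`. -/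
noncomputable def qlen {R : Type*} [CommRing R] (N P : Ideal R) : WithBot ℕ∞ :=
  modLength R (↥P ⧸ (Submodule.comap P.subtype N))

/-- A Noetherian local ring is Cohen–Macaulay if some system of parameters
is a regular sequence. -/
def IsCMLocal (R : Type*) [CommRing R] [IsLocalRing R] : Prop :=
  ∃ rs : List R, RingTheory.Sequence.IsRegular R rs ∧
    (Ideal.span {x | x ∈ rs}).radical = maximalIdeal R ∧
    (rs.length : WithBot ℕ∞) = ringKrullDim R

noncomputable def elen (R M : Type*) [Ring R] [AddCommGroup M] [Module R M] : ℕ∞ :=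
  Order.height (⊤ : Submodule R M)

section general
variable {R M : Type*} [Ring R] [AddCommGroup M] [Module R M]

lemma height_add_one_le {α : Type*} [Preorder α] {a b : α} (h : a < b) :
    Order.height a + 1 ≤ Order.height b := by
  rw [Order.height_eq_iSup_lt_height b]
  exact le_iSup₂ (f := fun y (_ : y < b) => Order.height y + 1) a h

lemma aux_le (N : Submodule R M) (p : LTSeries (Submodule R M)) :
    (p.length : ℕ∞) ≤ Order.height (Submodule.comap N.subtype p.last)
      + Order.height (Submodule.map N.mkQ p.last) := by
  suffices H : ∀ (n : ℕ) (p : LTSeries (Submodule R M)), p.length = n →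
      (p.length : ℕ∞) ≤ Order.height (Submodule.comap N.subtype p.last)
        + Order.height (Submodule.map N.mkQ p.last) from H p.length p rfl
  intro n
  induction n with
  | zero => intro p hn; rw [hn]; simp
  | succ n ih =>
    intro p hn
    have hlen : p.eraseLast.length = n := by simp [hn]
    have hlt : p.eraseLast.last < p.last := p.eraseLast_last_rel_last (by omega)
    have H := ih p.eraseLast hlen
    rw [hlen] at H
    rw [hn]
    set x := p.eraseLast.last with hx
    set y := p.last with hy
    by_cases hc : Submodule.comap N.subtype x < Submodule.comap N.subtype y
    · have h1 := height_add_one_le hc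
      have h2 : Order.height (Submodule.map N.mkQ x) ≤ Order.height (Submodule.map N.mkQ y) :=
        Order.height_mono (Submodule.map_mono hlt.le)
      push_cast
      calc (n : ℕ∞) + 1 ≤ (Order.height (Submodule.comap N.subtype x)
            + Order.height (Submodule.map N.mkQ x)) + 1 := by
            exact add_le_add (by exact_mod_cast H) le_rfl
        _ = (Order.height (Submodule.comap N.subtype x) + 1)
            + Order.height (Submodule.map N.mkQ x) := by ring
        _ ≤ _ := add_le_add h1 h2
    · have hceq : Submodule.comap N.subtype x = Submodule.comap N.subtype y :=
        le_antisymm (Submodule.comap_mono hlt.le) (by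
          by_contra hne
          exact hc (lt_of_le_of_ne (Submodule.comap_mono hlt.le) (fun h => hne h.ge)))
      have hinf : y ⊓ N ≤ x ⊓ N := by
        have := congrArg (Submodule.map N.subtype) hceq
        rw [Submodule.map_comap_subtype, Submodule.map_comap_subtype] at this
        rw [inf_comm (a := y), inf_comm (a := x)]
        exact this.ge
      have hsup : x ⊔ N < y ⊔ N := sup_lt_sup_of_lt_of_inf_le_inf hlt hinf
      have hmlt : Submodule.map N.mkQ x < Submodule.map N.mkQ y := by
        refine lt_of_le_of_ne (Submodule.map_mono hlt.le) (fun h => ?_)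
        have := congrArg (Submodule.comap N.mkQ) h
        rw [Submodule.comap_map_eq, Submodule.comap_map_eq, Submodule.ker_mkQ] at this
        exact hsup.ne this
      have h1 := height_add_one_le hmlt
      have h2 : Order.height (Submodule.comap N.subtype x)
          ≤ Order.height (Submodule.comap N.subtype y) := Order.height_mono (Submodule.comap_mono hlt.le)
      push_cast
      calc (n : ℕ∞) + 1 ≤ (Order.height (Submodule.comap N.subtype x)
            + Order.height (Submodule.map N.mkQ x)) + 1 := by
            exact add_le_add (by exact_mod_cast H) le_rfl
        _ = Order.height (Submodule.comap N.subtype x)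
            + (Order.height (Submodule.map N.mkQ x) + 1) := by ring
        _ ≤ _ := add_le_add h2 h1

lemma elen_le (N : Submodule R M) : elen R M ≤ elen R N + elen R (M ⧸ N) := by
  rw [elen]
  apply Order.height_le
  intro p _
  calc (p.length : ℕ∞) ≤ _ := aux_le N p
    _ ≤ elen R N + elen R (M ⧸ N) :=
      add_le_add (Order.height_mono le_top) (Order.height_mono le_top)

lemma elen_ge (N : Submodule R M) : elen R N + elen R (M ⧸ N) ≤ elen R M := by
  have h1 : elen R N ≤ Order.height (N : Submodule R M) := by
    have := Order.height_le_height_apply_of_strictMono _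
      (Submodule.map_strictMono_of_injective (N.injective_subtype)) (⊤ : Submodule R N)
    simpa [elen, Submodule.map_top, Submodule.range_subtype] using this
  have h2 : elen R (M ⧸ N) ≤ Order.coheight (N : Submodule R M) := by
    rw [elen, Order.coheight_eq]
    apply Order.height_le
    intro p _
    refine le_iSup₂_of_le (p.map (Submodule.comap N.mkQ)
      (Submodule.comap_strictMono_of_surjective (Submodule.mkQ_surjective N))) ?_ (by simp)
    show N ≤ Submodule.comap N.mkQ p.head
    calc N = Submodule.comap N.mkQ ⊥ := by simp [Submodule.comap_bot]
      _ ≤ _ := Submodule.comap_mono bot_le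
  have h3 : Order.height (N : Submodule R M) + Order.coheight (N : Submodule R M)
      ≤ elen R M := by
    have hkd := Order.krullDim_eq_iSup_height_add_coheight_of_nonempty (α := Submodule R M)
    rw [← Order.height_top_eq_krullDim] at hkd
    have : (⊤ : Submodule R M) = ⊤ := rfl
    have h4 : Order.height (⊤ : Submodule R M)
        = ⨆ (a : Submodule R M), Order.height a + Order.coheight a := by
      exact_mod_cast hkd
    rw [elen, h4]
    exact le_iSup (fun a => Order.height a + Order.coheight a) N
  calc elen R N + elen R (M ⧸ N) ≤ _ + _ := add_le_add h1 h2
    _ ≤ _ := h3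

lemma elen_add (N : Submodule R M) : elen R M = elen R N + elen R (M ⧸ N) :=
  le_antisymm (elen_le N) (elen_ge N)

lemma elen_congr {M' : Type*} [AddCommGroup M'] [Module R M'] (e : M ≃ₗ[R] M') :
    elen R M = elen R M' := by
  unfold elen
  rw [← Order.height_orderIso (Submodule.orderIsoMapComap e) ⊤]
  congr 1
  simp [Submodule.orderIsoMapComap]

lemma elen_eq_zero_iff : elen R M = 0 ↔ Subsingleton M := by
  constructor
  · intro h
    rw [elen, Order.height_eq_zero] at h
    refine ⟨fun a b => ?_⟩
    have hab : (⊤ : Submodule R M) ≤ ⊥ := h bot_le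
    have ha := hab (Submodule.mem_top (x := a))
    have hb := hab (Submodule.mem_top (x := b))
    simp only [Submodule.mem_bot] at ha hb
    rw [ha, hb]
  · intro h
    rw [elen, Order.height_eq_zero]
    intro W _
    intro v _
    simp [Subsingleton.elim v (0 : M)]

lemma elen_le_one (h : ∀ W : Submodule R M, W = ⊥ ∨ W = ⊤) : elen R M ≤ 1 := by
  rw [elen]
  apply Order.height_le
  intro p _
  by_contra hlt
  push_neg at hlt
  have h2 : 2 ≤ p.length := by
    by_contra hc
    push_neg at hc
    interval_cases hl : p.length <;> simp_all <;> exact absurd hlt (by simp [hl])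
  have h01 : p ⟨0, by omega⟩ < p ⟨1, by omega⟩ := p.strictMono (by simp [Fin.lt_def])
  have h12 : p ⟨1, by omega⟩ < p ⟨2, by omega⟩ := p.strictMono (by simp [Fin.lt_def])
  rcases h (p ⟨1, by omega⟩) with h1 | h1
  · rw [h1] at h01; exact not_lt_bot h01
  · rw [h1] at h12; exact not_top_lt h12

lemma elen_pos [Nontrivial M] : 1 ≤ elen R M := by
  have := height_add_one_le (bot_lt_top : (⊥ : Submodule R M) < ⊤)
  simpa [elen, Order.height_bot] using this

end general

section local_ring
variable {R : Type*} [CommRing R] [IsLocalRing R]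

lemma submodule_eq_bot_or_top {M : Type*} [AddCommGroup M] [Module R M]
    (v : M) (hspan : Submodule.span R {v} = ⊤)
    (hkill : ∀ c ∈ maximalIdeal R, ∀ w : M, c • w = 0)
    (W : Submodule R M) : W = ⊥ ∨ W = ⊤ := by
  by_cases hW : W = ⊥
  · exact Or.inl hW
  · right
    obtain ⟨w, hwW, hw0⟩ := Submodule.exists_mem_ne_zero_of_ne_bot hW
    have hw : w ∈ Submodule.span R {v} := by rw [hspan]; trivial
    obtain ⟨r, rfl⟩ := Submodule.mem_span_singleton.mp hw
    have hr : IsUnit r := by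
      by_contra hr
      exact hw0 (hkill r ((mem_maximalIdeal r).mpr hr) v)
    obtain ⟨u, rfl⟩ := hr
    rw [eq_top_iff, ← hspan, Submodule.span_le, Set.singleton_subset_iff]
    have : ((u⁻¹ : Rˣ) : R) • ((u : R) • v) ∈ W := W.smul_mem _ hwW
    simpa [smul_smul] using this

universe v

lemma elen_le_of_list_span :
    ∀ (n : ℕ) {M : Type v} [AddCommGroup M] [Module R M] (l : List M), l.length = n →
      Submodule.span R {x | x ∈ l} = ⊤ →
      (∀ c ∈ maximalIdeal R, ∀ w : M, c • w = 0) →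
      elen R M ≤ n := by
  intro n
  induction n with
  | zero =>
    intro M _ _ l hlen hspan hkill
    rw [List.length_eq_zero_iff] at hlen
    subst hlen
    have : Submodule.span R (∅ : Set M) = ⊤ := by simpa using hspan
    rw [Submodule.span_empty] at this
    have : Subsingleton M := by
      constructor
      intro a b
      have ha : a ∈ (⊥ : Submodule R M) := this ▸ Submodule.mem_top
      have hb : b ∈ (⊥ : Submodule R M) := this ▸ Submodule.mem_top
      simp only [Submodule.mem_bot] at ha hb
      rw [ha, hb]
    simpa using (elen_eq_zero_iff (R := R) (M := M)).mpr this
  | succ n ih =>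
    intro M _ _ l hlen hspan hkill
    obtain ⟨v, t, rfl⟩ : ∃ v t, l = v :: t := by
      cases l with
      | nil => simp at hlen
      | cons a b => exact ⟨a, b, rfl⟩
    simp only [List.length_cons, Nat.add_right_cancel_iff] at hlen
    set N : Submodule R M := Submodule.span R {x | x ∈ t} with hN
    -- quotient is cyclic
    have hq : Submodule.span R {Submodule.Quotient.mk (p := N) v} = ⊤ := by
      rw [eq_top_iff]
      rintro w -
      obtain ⟨u, rfl⟩ := Submodule.mkQ_surjective N w
      have hu : u ∈ Submodule.span R {x | x ∈ v :: t} := hspan ▸ Submodule.mem_top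
      induction hu using Submodule.span_induction with
      | mem x hx =>
        rcases List.mem_cons.mp hx with rfl | hx
        · rw [Submodule.mkQ_apply]; exact Submodule.subset_span rfl
        · have : (Submodule.mkQ N) x = 0 := by
            rw [Submodule.mkQ_apply, Submodule.Quotient.mk_eq_zero]
            exact Submodule.subset_span hx
          rw [this]
          exact Submodule.zero_mem _
      | zero => rw [map_zero]; exact Submodule.zero_mem _
      | add a b _ _ ha hb => rw [map_add]; exact Submodule.add_mem _ ha hb
      | smul c a _ ha => rw [map_smul]; exact Submodule.smul_mem _ c ha
    have hkillq : ∀ c ∈ maximalIdeal R, ∀ w : M ⧸ N, c • w = 0 := by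
      intro c hc w
      obtain ⟨u, rfl⟩ := Submodule.mkQ_surjective N w
      show c • (Submodule.Quotient.mk u : M ⧸ N) = 0
      rw [← Submodule.Quotient.mk_smul, hkill c hc u, Submodule.Quotient.mk_zero]
    have hquot : elen R (M ⧸ N) ≤ 1 :=
      elen_le_one (submodule_eq_bot_or_top _ hq hkillq)
    -- the submodule N
    have hkillN : ∀ c ∈ maximalIdeal R, ∀ w : ↥N, c • w = 0 := by
      intro c hc w
      ext
      simpa using hkill c hc (w : M)
    have hNl : elen R ↥N ≤ n := by
      refine ih (t.attach.map (fun x => (⟨x.1, Submodule.subset_span x.2⟩ : ↥N))) ?_ ?_ hkillN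
      · simp [hlen]
      · apply Submodule.map_injective_of_injective N.injective_subtype
        rw [Submodule.map_span, Submodule.map_top, Submodule.range_subtype]
        congr 1
        ext z
        constructor
        · rintro ⟨y, hy, rfl⟩
          simp only [Set.mem_setOf_eq, List.mem_map, List.mem_attach] at hy
          obtain ⟨a, -, rfl⟩ := hy
          exact a.2
        · intro hz
          exact ⟨⟨z, Submodule.subset_span hz⟩, by simpa using hz, rfl⟩
    calc elen R M = elen R ↥N + elen R (M ⧸ N) := elen_add N
      _ ≤ (n : ℕ∞) + 1 := add_le_add hNl hquot
      _ = ((n + 1 : ℕ) : ℕ∞) := by push_cast; ring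

lemma elen_ne_top_of_killed {M : Type v} [AddCommGroup M] [Module R M] [Module.Finite R M]
    (hkill : ∀ c ∈ maximalIdeal R, ∀ w : M, c • w = 0) : elen R M ≠ ⊤ := by
  obtain ⟨S, hS⟩ := Module.Finite.fg_top (R := R) (M := M)
  have : elen R M ≤ (S.toList.length : ℕ∞) := by
    refine elen_le_of_list_span _ S.toList rfl ?_ hkill
    rw [show {x : M | x ∈ S.toList} = (S : Set M) by ext z; simp]
    exact hS
  exact ne_top_of_le_ne_top (by simp) this

lemma elen_ne_top [IsNoetherianRing R] :
    ∀ (j : ℕ) {M : Type v} [AddCommGroup M] [Module R M] [Module.Finite R M],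
      (∀ c ∈ maximalIdeal R ^ j, ∀ w : M, c • w = 0) → elen R M ≠ ⊤ := by
  intro j
  induction j with
  | zero =>
    intro M _ _ _ hkill
    have : Subsingleton M := by
      constructor
      intro a b
      have ha := hkill 1 (by simp) a
      have hb := hkill 1 (by simp) b
      rw [one_smul] at ha hb
      rw [ha, hb]
    rw [elen_eq_zero_iff.mpr this]
    simp
  | succ j ih =>
    intro M _ _ _ hkill
    set N : Submodule R M := (maximalIdeal R) • (⊤ : Submodule R M) with hN
    have hNoeth : IsNoetherian R M := isNoetherian_of_isNoetherianRing_of_finite R M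
    have : Module.Finite R ↥N := Module.Finite.iff_fg.mpr (IsNoetherian.noetherian N)
    have hkillN : ∀ c ∈ maximalIdeal R ^ j, ∀ w : ↥N, c • w = 0 := by
      intro c hc w
      ext
      show c • (w : M) = 0
      have key : ∀ u ∈ (maximalIdeal R • (⊤ : Submodule R M)), c • u = 0 := by
        intro u hu
        refine Submodule.smul_induction_on hu (fun a ha u _ => ?_) (fun u v hu hv => ?_)
        · rw [smul_smul]
          exact hkill _ (by rw [pow_succ]; exact Ideal.mul_mem_mul hc ha) u
        · rw [smul_add, hu, hv, add_zero]
      exact key _ (hN ▸ w.2)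
    have hkillQ : ∀ c ∈ maximalIdeal R, ∀ w : M ⧸ N, c • w = 0 := by
      intro c hc w
      obtain ⟨u, rfl⟩ := Submodule.mkQ_surjective N w
      rw [← map_smul, Submodule.mkQ_apply, Submodule.Quotient.mk_eq_zero]
      exact Submodule.smul_mem_smul hc trivial
    have h1 := ih (M := ↥N) hkillN
    have h2 := elen_ne_top_of_killed hkillQ
    rw [elen_add N]
    exact WithTop.add_ne_top.mpr ⟨h1, h2⟩

end local_ring

section chains
variable {R : Type*} [CommRing R]

noncomputable def qelen (N P : Ideal R) : ℕ∞ :=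
  elen R (↥P ⧸ (Submodule.comap P.subtype N))

lemma elen_chain {N P : Ideal R} (h : N ≤ P) :
    elen R (R ⧸ N) = qelen N P + elen R (R ⧸ P) := by
  have key := elen_add (M := R ⧸ N) (Submodule.map N.mkQ P)
  have e2 : ((R ⧸ N) ⧸ (Submodule.map N.mkQ P)) ≃ₗ[R] R ⧸ P :=
    Submodule.quotientQuotientEquivQuotient N P h
  have hker : LinearMap.ker (N.mkQ.comp P.subtype) = Submodule.comap P.subtype N := by
    rw [LinearMap.ker_comp, Submodule.ker_mkQ]
  have hrange : LinearMap.range (N.mkQ.comp P.subtype) = Submodule.map N.mkQ P := by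
    rw [LinearMap.range_comp, Submodule.range_subtype]
  have e1 : (↥P ⧸ (Submodule.comap P.subtype N)) ≃ₗ[R] ↥(Submodule.map N.mkQ P) :=
    (Submodule.quotEquivOfEq _ _ hker.symm).trans
      (((N.mkQ.comp P.subtype).quotKerEquivRange).trans (LinearEquiv.ofEq _ _ hrange))
  rw [key, qelen, elen_congr e1, elen_congr e2]

-- the x-multiplication iso

lemma elen_x {x : R} (hxreg : x ∈ nonZeroDivisors R) (J : Ideal R) :
    qelen (Ideal.span {x} * J) (Ideal.span {x}) = elen R (R ⧸ J) := by
  set W : Submodule R ↥(Ideal.span {x} : Ideal R) :=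
    Submodule.comap (Ideal.span {x} : Ideal R).subtype (Ideal.span {x} * J) with hW
  set f : R →ₗ[R] ↥(Ideal.span {x} : Ideal R) :=
    LinearMap.toSpanSingleton R _ ⟨x, Ideal.subset_span rfl⟩ with hf
  have hfval : ∀ r : R, ((f r : ↥(Ideal.span {x} : Ideal R)) : R) = r * x := by
    intro r
    simp [hf, LinearMap.toSpanSingleton_apply]
  set g : R →ₗ[R] (↥(Ideal.span {x} : Ideal R) ⧸ W) := W.mkQ.comp f with hg
  have hgsurj : Function.Surjective g := by
    intro w
    obtain ⟨⟨u, hu⟩, rfl⟩ := W.mkQ_surjective w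
    obtain ⟨r, hr⟩ := Ideal.mem_span_singleton'.mp hu
    refine ⟨r, ?_⟩
    show W.mkQ (f r) = W.mkQ ⟨u, hu⟩
    congr 1
    ext
    rw [hfval]
    exact hr
  have hker : LinearMap.ker g = J := by
    ext r
    simp only [hg, LinearMap.mem_ker, LinearMap.comp_apply, Submodule.mkQ_apply,
      Submodule.Quotient.mk_eq_zero]
    show f r ∈ W ↔ r ∈ J
    rw [hW, Submodule.mem_comap]
    show ((f r : ↥(Ideal.span {x} : Ideal R)) : R) ∈ _ ↔ _
    rw [hfval]
    constructor
    · intro hmem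
      obtain ⟨z, hz, hzx⟩ := Ideal.mem_span_singleton_mul.mp hmem
      have hzz : x * z = x * r := by rw [hzx]; ring
      have := (mul_cancel_left_mem_nonZeroDivisors hxreg).mp hzz
      rwa [← this]
    · intro hr
      have : r * x = x * r := mul_comm r x
      rw [this]
      exact Ideal.mem_span_singleton_mul.mpr ⟨r, hr, rfl⟩
  have equiv : (R ⧸ J) ≃ₗ[R] (↥(Ideal.span {x} : Ideal R) ⧸ W) :=
    (Submodule.quotEquivOfEq _ _ hker.symm).trans (g.quotKerEquivOfSurjective hgsurj)
  exact (elen_congr equiv).symm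

end chains

open PowerSeries in
/-- under the setup of the previous statement, if `μ(I) = e(R)` then
`mIⁿ = xIⁿ` and `μ(Iⁿ) = e(R)` for all `n ≥ 1`; i.e. the Hilbert series of the fiber
cone is `(1 + (e(R) − 1)λ)/(1 − λ)`. -/
theorem stmt5 {R : Type*} [CommRing R] [IsLocalRing R] [IsNoetherianRing R]
    (hCM : IsCMLocal R) (hdim : ringKrullDim R = 1)
    (hres : Infinite (ResidueField R))
    (I : Ideal R) (hIm : I ≤ maximalIdeal R) (hprim : ∃ k, maximalIdeal R ^ k ≤ I)
    (x : R) (hx : x ∈ maximalIdeal R) (hxreg : x ∈ nonZeroDivisors R)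
    (hred : ∃ N, ∀ n ≥ N, maximalIdeal R ^ (n + 1) = Ideal.span {x} * maximalIdeal R ^ n)
    (e : ℕ) (he : modLength R (R ⧸ Ideal.span {x}) = (e : WithBot ℕ∞))
    (μ : ℕ → ℕ)
    (hμ : ∀ n : ℕ, qlen (maximalIdeal R * I ^ n) (I ^ n) = (μ n : WithBot ℕ∞))
    (hmin : μ 1 = e) :
    (∀ n : ℕ, 1 ≤ n → maximalIdeal R * I ^ n = Ideal.span {x} * I ^ n) ∧
    (∀ n : ℕ, 1 ≤ n → μ n = e) ∧
    PowerSeries.mk (fun n => (μ n : ℤ)) * (1 - X) = 1 + C ((e : ℤ) - 1) * X := by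
  classical
  have hμ' : ∀ n, qelen (maximalIdeal R * I ^ n) (I ^ n) = (μ n : ℕ∞) := by
    intro n
    have h := hμ n
    rw [qlen, modLength, ← Order.height_top_eq_krullDim] at h
    exact_mod_cast h
  have he' : elen R (R ⧸ Ideal.span {x}) = (e : ℕ∞) := by
    rw [modLength, ← Order.height_top_eq_krullDim] at he
    exact_mod_cast he
  obtain ⟨k, hk⟩ := hprim
  obtain ⟨N₀, hN₀⟩ := hred
  have hfin : ∀ J : Ideal R, (∃ j, maximalIdeal R ^ j ≤ J) → elen R (R ⧸ J) ≠ ⊤ := by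
    rintro J ⟨j, hj⟩
    refine elen_ne_top j (M := R ⧸ J) ?_
    intro c hc w
    obtain ⟨u, rfl⟩ := Submodule.mkQ_surjective (J : Submodule R R) w
    rw [← map_smul, Submodule.mkQ_apply, Submodule.Quotient.mk_eq_zero]
    exact Ideal.mul_mem_right u J (hj hc)
  have hIn : ∀ n : ℕ, ∃ j, maximalIdeal R ^ j ≤ I ^ n :=
    fun n => ⟨k * n, by rw [pow_mul]; exact Ideal.pow_right_mono hk n⟩
  have hxIn : ∀ n : ℕ, ∃ j, maximalIdeal R ^ j ≤ Ideal.span {x} * I ^ n := by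
    intro n
    obtain ⟨j, hj⟩ := hIn n
    refine ⟨N₀ + j + 1, ?_⟩
    have h1 : maximalIdeal R ^ (N₀ + j + 1) = Ideal.span {x} * maximalIdeal R ^ (N₀ + j) :=
      hN₀ (N₀ + j) (by omega)
    rw [h1]
    refine Ideal.mul_mono_right ?_
    calc maximalIdeal R ^ (N₀ + j) ≤ maximalIdeal R ^ j := Ideal.pow_le_pow_right (by omega)
      _ ≤ I ^ n := hj
  have hkey : ∀ n : ℕ, qelen (Ideal.span {x} * I ^ n) (I ^ n) = (e : ℕ∞) := by
    intro n
    have hc1 : elen R (R ⧸ (Ideal.span {x} * I ^ n : Ideal R))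
        = qelen (Ideal.span {x} * I ^ n) (I ^ n) + elen R (R ⧸ (I ^ n : Ideal R)) :=
      elen_chain Ideal.mul_le_right
    have hc2 : elen R (R ⧸ (Ideal.span {x} * I ^ n : Ideal R))
        = qelen (Ideal.span {x} * I ^ n) (Ideal.span {x})
            + elen R (R ⧸ (Ideal.span {x} : Ideal R)) :=
      elen_chain Ideal.mul_le_left
    rw [elen_x hxreg, he', add_comm] at hc2
    rw [hc2] at hc1
    have hc1' : (e : ℕ∞) + elen R (R ⧸ (I ^ n : Ideal R))
        = qelen (Ideal.span {x} * I ^ n) (I ^ n) + elen R (R ⧸ (I ^ n : Ideal R)) := hc1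
    exact (WithTop.add_right_cancel (hfin _ (hIn n)) hc1').symm
  have hkey1 : qelen (Ideal.span {x} * I) I = (e : ℕ∞) := by
    have := hkey 1; rwa [pow_one] at this
  have hq1 : qelen (maximalIdeal R * I) I = (e : ℕ∞) := by
    have h := hμ' 1; rw [pow_one] at h; rw [h]
    exact_mod_cast hmin
  have hxm : Ideal.span {x} * I ≤ maximalIdeal R * I :=
    Ideal.mul_mono_left (by rwa [Ideal.span_le, Set.singleton_subset_iff])
  have hA1 : elen R (R ⧸ (I : Ideal R)) ≠ ⊤ := by
    have := hfin (I ^ 1) (hIn 1); rwa [pow_one] at this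
  have hd : maximalIdeal R * I = Ideal.span {x} * I := by
    have c1 : elen R (R ⧸ (Ideal.span {x} * I : Ideal R))
        = qelen (Ideal.span {x} * I) I + elen R (R ⧸ (I : Ideal R)) :=
      elen_chain Ideal.mul_le_right
    have c2 : elen R (R ⧸ (Ideal.span {x} * I : Ideal R))
        = qelen (Ideal.span {x} * I) (maximalIdeal R * I)
            + elen R (R ⧸ (maximalIdeal R * I : Ideal R)) :=
      elen_chain hxm
    have c3 : elen R (R ⧸ (maximalIdeal R * I : Ideal R))
        = qelen (maximalIdeal R * I) I + elen R (R ⧸ (I : Ideal R)) :=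
      elen_chain Ideal.mul_le_right
    rw [hkey1] at c1
    rw [c3, hq1] at c2
    rw [c1] at c2
    -- c2 : e + A = q0 + (e + A)
    have hne : (e : ℕ∞) + elen R (R ⧸ (I : Ideal R)) ≠ ⊤ :=
      WithTop.add_ne_top.mpr ⟨ENat.coe_ne_top e, hA1⟩
    have c2' : (0 : ℕ∞) + ((e : ℕ∞) + elen R (R ⧸ (I : Ideal R)))
        = qelen (Ideal.span {x} * I) (maximalIdeal R * I)
            + ((e : ℕ∞) + elen R (R ⧸ (I : Ideal R))) := by
      rw [zero_add]; exact c2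
    have hq0 : qelen (Ideal.span {x} * I) (maximalIdeal R * I) = 0 :=
      (WithTop.add_right_cancel hne c2').symm
    have hsub : Subsingleton (↥(maximalIdeal R * I) ⧸
        (Submodule.comap (maximalIdeal R * I).subtype (Ideal.span {x} * I))) :=
      elen_eq_zero_iff.mp hq0
    have htop : Submodule.comap (maximalIdeal R * I).subtype (Ideal.span {x} * I) = ⊤ :=
      Submodule.Quotient.subsingleton_iff.mp hsub
    refine le_antisymm ?_ hxm
    intro v hv
    have : (⟨v, hv⟩ : ↥(maximalIdeal R * I)) ∈
        Submodule.comap (maximalIdeal R * I).subtype (Ideal.span {x} * I) := by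
      rw [htop]; trivial
    exact this
  have hmain1 : ∀ n : ℕ, 1 ≤ n → maximalIdeal R * I ^ n = Ideal.span {x} * I ^ n := by
    intro n hn
    obtain ⟨k', rfl⟩ : ∃ k', n = k' + 1 := ⟨n - 1, by omega⟩
    rw [pow_succ']
    rw [← mul_assoc, ← mul_assoc, hd]
  have hmain2 : ∀ n : ℕ, 1 ≤ n → μ n = e := by
    intro n hn
    have h := hμ' n
    rw [hmain1 n hn, hkey n] at h
    exact_mod_cast h.symm
  have hμ0 : μ 0 = 1 := by
    have h := hμ' 0
    rw [pow_zero, Ideal.one_eq_top, Ideal.mul_top] at h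
    -- qelen m ⊤ = μ 0; show qelen m ⊤ = 1
    have hchain : elen R (R ⧸ (maximalIdeal R : Ideal R))
        = qelen (maximalIdeal R) ⊤ + elen R (R ⧸ (⊤ : Ideal R)) :=
      elen_chain le_top
    have htop0 : elen R (R ⧸ (⊤ : Ideal R)) = 0 :=
      elen_eq_zero_iff.mpr (Submodule.Quotient.subsingleton_iff.mpr rfl)
    have hres1 : elen R (R ⧸ (maximalIdeal R : Ideal R)) = 1 := by
      refine le_antisymm ?_ ?_
      · refine elen_le_one (submodule_eq_bot_or_top
          (Submodule.Quotient.mk (1 : R)) ?_ ?_)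
        · rw [eq_top_iff]
          rintro w -
          obtain ⟨u, rfl⟩ := Submodule.mkQ_surjective _ w
          refine Submodule.mem_span_singleton.mpr ⟨u, ?_⟩
          have hh : u • (Submodule.Quotient.mk (1 : R) :
              R ⧸ (maximalIdeal R : Submodule R R)) = Submodule.Quotient.mk (u • (1 : R)) :=
            (Submodule.Quotient.mk_smul _ _ _).symm
          rw [hh, smul_eq_mul, mul_one, Submodule.mkQ_apply]
        · intro c hc w
          obtain ⟨u, rfl⟩ := Submodule.mkQ_surjective _ w
          rw [← map_smul, Submodule.mkQ_apply, Submodule.Quotient.mk_eq_zero]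
          exact Ideal.mul_mem_right u _ hc
      · have : Nontrivial (R ⧸ (maximalIdeal R : Ideal R)) :=
          Ideal.Quotient.nontrivial_iff.mpr
            (Ideal.IsMaximal.ne_top inferInstance)
        exact elen_pos
    rw [hres1, htop0, add_zero] at hchain
    rw [h] at hchain
    exact_mod_cast hchain.symm
  refine ⟨hmain1, hmain2, ?_⟩
  ext n
  rw [mul_sub, mul_one, map_sub, map_add]
  match n with
  | 0 => simp [coeff_zero_mul_X, hμ0, coeff_zero_eq_constantCoeff]
  | 1 =>
    rw [coeff_succ_mul_X, coeff_mk, coeff_mk, hμ0, hmin]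
    have h1 : (coeff 1) (C ((e : ℤ) - 1) * X) = (e : ℤ) - 1 := by
      simpa using coeff_succ_mul_X 0 (C ((e : ℤ) - 1))
    rw [h1]
    simp
  | (n+2) =>
    rw [coeff_succ_mul_X, coeff_mk, coeff_mk, hmain2 (n+2) (by omega),
      hmain2 (n+1) (by omega)]
    have h2 : (coeff (n+2)) (C ((e : ℤ) - 1) * X) = 0 := by
      rw [coeff_succ_mul_X, coeff_C]
      simp
    rw [h2]
    simp
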